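/- The improper integral over the real line of the complex rational function x ↦ (2i − 6x)/((x−i)³(x+i)³) equals (3/4)πi. -/

import Mathlib

open Complex MeasureTheory Filter Real Topology

noncomputable def gAux : ℝ → ℝ := fun x =>
  x / (2 * (1 + x ^ 2) ^ 2) + 3 * x / (4 * (1 + x ^ 2)) + (3 / 4) * Real.arctan x

noncomputable def FAux : ℝ → ℂ := fun x =>
  ((3 / (2 * (1 + x ^ 2) ^ 2) : ℝ) : ℂ) + ((gAux x : ℝ) : ℂ) * I

lemma inv_abs_tendsto_atTop : Tendsto (fun x : ℝ => |x|⁻¹) atTop (𝓝 0) :=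
  tendsto_inv_atTop_zero.comp tendsto_abs_atTop_atTop

lemma inv_abs_tendsto_atBot : Tendsto (fun x : ℝ => |x|⁻¹) atBot (𝓝 0) :=
  tendsto_inv_atTop_zero.comp tendsto_abs_atBot_atTop

lemma t1_tendsto {l : Filter ℝ} (hl : Tendsto (fun x : ℝ => |x|⁻¹) l (𝓝 0))
    (h0 : ∀ᶠ x : ℝ in l, 1 ≤ |x|) :
    Tendsto (fun x : ℝ => x / (2 * (1 + x ^ 2) ^ 2)) l (𝓝 0) := by
  apply squeeze_zero_norm' _ hl
  filter_upwards [h0] with x hx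
  have hxpos : (0:ℝ) < |x| := lt_of_lt_of_le one_pos hx
  have hD : (0:ℝ) < 2 * (1 + x ^ 2) ^ 2 := by positivity
  rw [Real.norm_eq_abs, abs_div, abs_of_pos hD, div_le_iff₀ hD, inv_mul_eq_div,
    le_div_iff₀ hxpos]
  nlinarith [_root_.sq_abs x]

lemma t2_tendsto {l : Filter ℝ} (hl : Tendsto (fun x : ℝ => |x|⁻¹) l (𝓝 0))
    (h0 : ∀ᶠ x : ℝ in l, 1 ≤ |x|) :
    Tendsto (fun x : ℝ => 3 * x / (4 * (1 + x ^ 2))) l (𝓝 0) := by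
  apply squeeze_zero_norm' _ hl
  filter_upwards [h0] with x hx
  have hxpos : (0:ℝ) < |x| := lt_of_lt_of_le one_pos hx
  have hD : (0:ℝ) < 4 * (1 + x ^ 2) := by positivity
  have h3 : |3 * x| = 3 * |x| := by rw [abs_mul]; norm_num
  rw [Real.norm_eq_abs, abs_div, abs_of_pos hD, h3, div_le_iff₀ hD, inv_mul_eq_div,
    le_div_iff₀ hxpos]
  nlinarith [_root_.sq_abs x]

lemma gAux_tendsto_atTop : Tendsto gAux atTop (𝓝 (3 * Real.pi / 8)) := by
  have h0 : ∀ᶠ x : ℝ in atTop, 1 ≤ |x| := by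
    filter_upwards [eventually_ge_atTop (1:ℝ)] with x hx
    exact le_trans hx (le_abs_self x)
  have h3 : Tendsto (fun x : ℝ => (3 / 4) * Real.arctan x) atTop (𝓝 ((3/4) * (Real.pi / 2))) :=
    (tendsto_nhds_of_tendsto_nhdsWithin Real.tendsto_arctan_atTop).const_mul _
  have := ((t1_tendsto inv_abs_tendsto_atTop h0).add (t2_tendsto inv_abs_tendsto_atTop h0)).add h3
  unfold gAux
  convert this using 2 <;> ring

lemma gAux_tendsto_atBot : Tendsto gAux atBot (𝓝 (-(3 * Real.pi / 8))) := by
  have h0 : ∀ᶠ x : ℝ in atBot, 1 ≤ |x| := by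
    filter_upwards [eventually_le_atBot (-1:ℝ)] with x hx
    rw [abs_of_nonpos (by linarith)]; linarith
  have h3 : Tendsto (fun x : ℝ => (3 / 4) * Real.arctan x) atBot (𝓝 ((3/4) * (-(Real.pi / 2)))) :=
    (tendsto_nhds_of_tendsto_nhdsWithin Real.tendsto_arctan_atBot).const_mul _
  have := ((t1_tendsto inv_abs_tendsto_atBot h0).add (t2_tendsto inv_abs_tendsto_atBot h0)).add h3
  unfold gAux
  convert this using 2 <;> ring

lemma u_tendsto {l : Filter ℝ} (hl : Tendsto (fun x : ℝ => |x|⁻¹) l (𝓝 0))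
    (h0 : ∀ᶠ x : ℝ in l, 1 ≤ |x|) :
    Tendsto (fun x : ℝ => 3 / (2 * (1 + x ^ 2) ^ 2)) l (𝓝 0) := by
  apply squeeze_zero_norm' _ hl
  filter_upwards [h0] with x hx
  have hxpos : (0:ℝ) < |x| := lt_of_lt_of_le one_pos hx
  have hD : (0:ℝ) < 2 * (1 + x ^ 2) ^ 2 := by positivity
  have h3 : |(3:ℝ)| = 3 := by norm_num
  rw [Real.norm_eq_abs, abs_div, abs_of_pos hD, h3, div_le_iff₀ hD, inv_mul_eq_div,
    le_div_iff₀ hxpos]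
  nlinarith [_root_.sq_abs x]

lemma FAux_hasDeriv (x : ℝ) :
    HasDerivAt FAux
      (((-6 * x / (1 + x ^ 2) ^ 3 : ℝ) : ℂ) + ((2 / (1 + x ^ 2) ^ 3 : ℝ) : ℂ) * I) x := by
  have hne : (1 + x ^ 2 : ℝ) ≠ 0 := by positivity
  have hd0 : HasDerivAt (fun y : ℝ => 1 + y ^ 2) (2 * x) x := by
    simpa using (hasDerivAt_pow 2 x).const_add 1
  have hden : HasDerivAt (fun y : ℝ => 2 * (1 + y ^ 2) ^ 2)
      (2 * (2 * (1 + x ^ 2) * (2 * x))) x := by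
    simpa [mul_assoc] using ((hd0.pow 2).const_mul 2)
  have hden2 : HasDerivAt (fun y : ℝ => 4 * (1 + y ^ 2)) (4 * (2 * x)) x := hd0.const_mul 4
  have hdne : (2 * (1 + x ^ 2) ^ 2 : ℝ) ≠ 0 := by positivity
  have hdne2 : (4 * (1 + x ^ 2) : ℝ) ≠ 0 := by positivity
  -- derivative of u
  have hu : HasDerivAt (fun y : ℝ => 3 / (2 * (1 + y ^ 2) ^ 2))
      (-6 * x / (1 + x ^ 2) ^ 3) x := by
    have := (hasDerivAt_const x (3:ℝ)).div hden hdne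
    refine this.congr_deriv ?_
    field_simp
    ring
  -- derivative of g
  have hg : HasDerivAt gAux (2 / (1 + x ^ 2) ^ 3) x := by
    have h1 := (hasDerivAt_id x).div hden hdne
    have h2 := ((hasDerivAt_id x).const_mul 3).div hden2 hdne2
    have h3 := (Real.hasDerivAt_arctan x).const_mul (3/4 : ℝ)
    have := (h1.add h2).add h3
    refine this.congr_deriv ?_
    simp only [id]
    field_simp
    ring
  exact (hu.ofReal_comp).add ((hg.ofReal_comp).mul_const I)

theorem integral_dim5 :
    ∫ x : ℝ, ((2 * I - 6 * x) / ((x - I) ^ 3 * (x + I) ^ 3) : ℂ)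
      = ((3 : ℂ) / 4) * (Real.pi : ℂ) * I := by
  have key : ∀ x : ℝ, ((2 * I - 6 * x) / ((x - I) ^ 3 * (x + I) ^ 3) : ℂ)
      = ((-6 * x / (1 + x ^ 2) ^ 3 : ℝ) : ℂ) + ((2 / (1 + x ^ 2) ^ 3 : ℝ) : ℂ) * I := by
    intro x
    have hne : (1 + x ^ 2 : ℝ) ≠ 0 := by positivity
    have hcne : (1 + (x:ℂ) ^ 2) ≠ 0 := by
      rw [show (1 + (x:ℂ) ^ 2) = ((1 + x ^ 2 : ℝ) : ℂ) by push_cast; ring]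
      exact Complex.ofReal_ne_zero.mpr hne
    have hfact : ((x:ℂ) - I) ^ 3 * ((x:ℂ) + I) ^ 3 = (1 + (x:ℂ) ^ 2) ^ 3 := by
      have : ((x:ℂ) - I) * ((x:ℂ) + I) = 1 + (x:ℂ) ^ 2 := by
        have : I ^ 2 = -1 := Complex.I_sq
        ring_nf
        rw [this]; ring
      calc ((x:ℂ) - I) ^ 3 * ((x:ℂ) + I) ^ 3 = (((x:ℂ) - I) * ((x:ℂ) + I)) ^ 3 := by ring
        _ = (1 + (x:ℂ) ^ 2) ^ 3 := by rw [this]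
    rw [hfact]
    push_cast
    field_simp
    ring
  simp only [key]
  -- integrability
  have hne' : ∀ x : ℝ, (1 + x ^ 2 : ℝ) ≠ 0 := fun x => by positivity
  have hint : Integrable (fun x : ℝ =>
      ((-6 * x / (1 + x ^ 2) ^ 3 : ℝ) : ℂ) + ((2 / (1 + x ^ 2) ^ 3 : ℝ) : ℂ) * I) := by
    have hbound : Integrable (fun x : ℝ => 8 * (1 + x ^ 2)⁻¹) :=
      integrable_inv_one_add_sq.const_mul 8
    apply hbound.mono
    · apply Continuous.aestronglyMeasurable
      have c1 : Continuous fun x : ℝ => -6 * x / (1 + x ^ 2) ^ 3 :=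
        (continuous_const.mul continuous_id).div (by continuity) (fun x => by positivity)
      have c2 : Continuous fun x : ℝ => 2 / (1 + x ^ 2) ^ 3 :=
        continuous_const.div (by continuity) (fun x => by positivity)
      exact (Complex.continuous_ofReal.comp c1).add
        ((Complex.continuous_ofReal.comp c2).mul continuous_const)
    · filter_upwards with x
      have h1 : (0:ℝ) < 1 + x ^ 2 := by positivity
      have hb : ‖((-6 * x / (1 + x ^ 2) ^ 3 : ℝ) : ℂ) + ((2 / (1 + x ^ 2) ^ 3 : ℝ) : ℂ) * I‖
          ≤ ‖((-6 * x / (1 + x ^ 2) ^ 3 : ℝ) : ℂ)‖ + ‖((2 / (1 + x ^ 2) ^ 3 : ℝ) : ℂ) * I‖ :=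
        norm_add_le _ _
      have e1 : ‖((-6 * x / (1 + x ^ 2) ^ 3 : ℝ) : ℂ)‖ = |(-6 * x / (1 + x ^ 2) ^ 3 : ℝ)| := by
        rw [Complex.norm_real, Real.norm_eq_abs]
      have e2 : ‖((2 / (1 + x ^ 2) ^ 3 : ℝ) : ℂ) * I‖ = |(2 / (1 + x ^ 2) ^ 3 : ℝ)| := by
        rw [norm_mul, Complex.norm_I, mul_one, Complex.norm_real, Real.norm_eq_abs]
      rw [Real.norm_eq_abs, _root_.abs_of_nonneg (by positivity : (0:ℝ) ≤ 8 * (1 + x ^ 2)⁻¹)]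
      refine le_trans hb ?_
      have hD : (0:ℝ) < (1 + x ^ 2) ^ 3 := by positivity
      have h6 : |(-6 : ℝ) * x| = 6 * |x| := by rw [abs_mul]; norm_num
      have h2' : |(2:ℝ)| = 2 := by norm_num
      rw [e1, e2, _root_.abs_div, _root_.abs_div, abs_of_pos hD, h6, h2', ← add_div,
        show (8:ℝ) * (1 + x ^ 2)⁻¹ = (8 * (1 + x ^ 2) ^ 2) / (1 + x ^ 2) ^ 3 by
          field_simp]
      rw [div_le_div_iff_of_pos_right hD]
      nlinarith [sq_nonneg (|x| - 1), _root_.sq_abs x, abs_nonneg x]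
  rw [integral_of_hasDerivAt_of_tendsto FAux_hasDeriv hint
      (m := ((-(3 * Real.pi / 8) : ℝ) : ℂ) * I) (n := ((3 * Real.pi / 8 : ℝ) : ℂ) * I) ?_ ?_]
  · push_cast; ring
  · -- atBot
    have h0 : ∀ᶠ x : ℝ in atBot, 1 ≤ |x| := by
      filter_upwards [eventually_le_atBot (-1:ℝ)] with x hx
      rw [abs_of_nonpos (by linarith)]; linarith
    have hu := u_tendsto inv_abs_tendsto_atBot h0
    have hg := gAux_tendsto_atBot
    have := ((Complex.continuous_ofReal.tendsto 0).comp hu).add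
      (((Complex.continuous_ofReal.tendsto _).comp hg).mul_const I)
    unfold FAux
    simpa using this
  · -- atTop
    have h0 : ∀ᶠ x : ℝ in atTop, 1 ≤ |x| := by
      filter_upwards [eventually_ge_atTop (1:ℝ)] with x hx
      exact le_trans hx (le_abs_self x)
    have hu := u_tendsto inv_abs_tendsto_atTop h0
    have hg := gAux_tendsto_atTop
    have := ((Complex.continuous_ofReal.tendsto 0).comp hu).add
      (((Complex.continuous_ofReal.tendsto _).comp hg).mul_const I)
    unfold FAux
    simpa using this
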